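/- Let x₁ > x₂ > ... > xₙ be real numbers with n ≥ 2. Then the sum over i from 1 to n of softmax(0, x₁, ..., x̂ᵢ, ..., xₙ) evaluated at coordinate i-1 is strictly greater than 1, where x̂ᵢ denotes omission of xᵢ, and softmax(0, y₁, ..., y_{n-1}) at coordinate j (for j ∈ {0, ..., n-1}) equals e^{y_j}/(1 + e^{y₁} + ... + e^{y_{n-1}}) with the convention e^{y₀} := 1. -/

import Mathlib

open Finset in
/-- For reals `x 1 > x 2 > ⋯ > x n` with `n ≥ 2`, the sum over `i` of
`softmax (0, x 1, …, x̂ i, …, x n)` evaluated at coordinate `i - 1` exceeds `1`.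
The `(i-1)`-th entry of the tuple `(0, x 1, …, x̂ i, …, x n)` is `0` when `i = 1`
and `x (i-1)` otherwise, while the denominator is `1 + ∑_{j ≠ i} e^{x j}`. -/
theorem softmax_sum_gt_one (n : ℕ) (hn : 2 ≤ n) (x : ℕ → ℝ)
    (hanti : ∀ i j, 1 ≤ i → i < j → j ≤ n → x j < x i) :
    ∑ i ∈ Finset.Icc 1 n,
        (if i = 1 then 1 else Real.exp (x (i - 1))) /
          (1 + ∑ j ∈ (Finset.Icc 1 n).erase i, Real.exp (x j)) > 1 := by
  set T : ℝ := ∑ j ∈ Finset.Icc 1 n, Real.exp (x j) with hT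
  set D : ℝ := 1 + T - Real.exp (x n) with hD
  have hnmem : n ∈ Finset.Icc 1 n := by simp; omega
  have hTn : Real.exp (x n) ≤ T :=
    Finset.single_le_sum (fun j _ => (Real.exp_pos _).le) hnmem
  have hDpos : 0 < D := by simp only [hD]; linarith
  have hnum : ∑ i ∈ Finset.Icc 1 n,
      (if i = 1 then 1 else Real.exp (x (i - 1))) = D := by
    have h1 : (1 : ℕ) ∈ Finset.Icc 1 n := by simp; omega
    rw [← Finset.add_sum_erase _ _ h1]
    simp only [if_pos rfl]
    have herase : (Finset.Icc 1 n).erase 1 = Finset.Icc 2 n := by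
      ext k; simp [Finset.mem_Icc]; omega
    rw [herase]
    have hre : ∑ i ∈ Finset.Icc 2 n, (if i = 1 then (1:ℝ) else Real.exp (x (i-1)))
        = ∑ j ∈ Finset.Icc 1 (n-1), Real.exp (x j) := by
      rw [Finset.sum_ite_of_false (by intro i hi; simp at hi; omega)]
      apply Finset.sum_nbij' (fun i => i - 1) (fun j => j + 1)
      · intro i hi; simp at hi ⊢; omega
      · intro j hj; simp at hj ⊢; omega
      · intro i hi; simp at hi; omega
      · intro j hj; omega
      · intro i hi; rfl
    rw [hre, hD, hT]
    have : Finset.Icc 1 n = insert n (Finset.Icc 1 (n-1)) := by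
      ext k; simp [Finset.mem_Icc]; omega
    rw [this, Finset.sum_insert (by simp; omega)]
    simp
    ring
  have key : ∀ i ∈ Finset.Icc 1 n,
      (if i = 1 then (1:ℝ) else Real.exp (x (i - 1))) / D ≤
      (if i = 1 then (1:ℝ) else Real.exp (x (i - 1))) /
        (1 + ∑ j ∈ (Finset.Icc 1 n).erase i, Real.exp (x j)) := by
    intro i hi
    rw [Finset.sum_erase_eq_sub hi]
    simp at hi
    have hnumpos : (0:ℝ) ≤ (if i = 1 then (1:ℝ) else Real.exp (x (i - 1))) := by
      split_ifs
      · norm_num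
      · exact (Real.exp_pos _).le
    have hTi : Real.exp (x i) ≤ T :=
      Finset.single_le_sum (fun j _ => (Real.exp_pos _).le) (by simp; omega)
    have hdenpos : (0:ℝ) < 1 + (T - Real.exp (x i)) := by
      have := Real.exp_pos (x i); linarith
    have hle : Real.exp (x n) ≤ Real.exp (x i) := by
      rcases eq_or_lt_of_le hi.2 with h | h
      · rw [h]
      · exact (Real.exp_lt_exp.2 (hanti i n hi.1 h le_rfl)).le
    have hdle : 1 + (T - Real.exp (x i)) ≤ D := by simp only [hD]; linarith
    exact div_le_div_of_nonneg_left hnumpos hdenpos hdle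
  have strict : (if (1:ℕ) = 1 then (1:ℝ) else Real.exp (x 0)) / D <
      (if (1:ℕ) = 1 then (1:ℝ) else Real.exp (x 0)) /
        (1 + ∑ j ∈ (Finset.Icc 1 n).erase 1, Real.exp (x j)) := by
    have h1 : (1:ℕ) ∈ Finset.Icc 1 n := by simp; omega
    rw [Finset.sum_erase_eq_sub h1]
    simp only [if_pos rfl]
    have hx1 : Real.exp (x n) < Real.exp (x 1) :=
      Real.exp_lt_exp.2 (hanti 1 n le_rfl (by omega) le_rfl)
    have hTi : Real.exp (x 1) ≤ T :=
      Finset.single_le_sum (fun j _ => (Real.exp_pos _).le) h1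
    have hden : 0 < 1 + (T - Real.exp (x 1)) := by
      have := Real.exp_pos (x 1); linarith
    apply div_lt_div_of_pos_left one_pos hden
    simp only [hD]; linarith
  have hlt : ∑ i ∈ Finset.Icc 1 n,
      (if i = 1 then (1:ℝ) else Real.exp (x (i - 1))) / D <
      ∑ i ∈ Finset.Icc 1 n,
        (if i = 1 then (1:ℝ) else Real.exp (x (i - 1))) /
          (1 + ∑ j ∈ (Finset.Icc 1 n).erase i, Real.exp (x j)) := by
    apply Finset.sum_lt_sum key
    exact ⟨1, by simp; omega, strict⟩
  have : ∑ i ∈ Finset.Icc 1 n,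
      (if i = 1 then (1:ℝ) else Real.exp (x (i - 1))) / D = 1 := by
    rw [← Finset.sum_div, hnum, div_self hDpos.ne']
  linarith
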